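/- Let (C_k)_{k≥0} be a sequence of Laurent polynomials with integer coefficients such that there exist positive constants A, B, D with ℓ¹-norm ‖C_k‖₁ ≤ e^{A k + B log k} and support of C_k contained in [−D k², D k²] for all k ≥ 1. For k ≥ 0 and α, ε ∈ ℂ define g_k(α, ε) = (∏_{j=1}^{k} ((e^{α/2} − e^{−α/2})² − (e^{jε/2} − e^{−jε/2})²)) · C_k(e^{ε}). Then there exists an open neighborhood U of 0 in ℂ such that for every integer N ≥ 1 there exists a constant M_N > 0 with the following property: for all integers n ≥ 1 and all α ∈ U with α ≠ 0, |n/α|^N · |∑_{k=0}^{n} (g_k(α, α/n) − ∑_{j=0}^{N−1} (1/j!) · (∂^j g_k/∂ε^j)(α, 0) · (α/n)^j)| ≤ M_N. -/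

import Mathlib

/-- The evaluation of an integer Laurent polynomial (a finitely supported function `ℤ → ℤ`)
at a complex number `q`: `∑_j a_j q^j`. -/
noncomputable def laurentEval (c : ℤ →₀ ℤ) (q : ℂ) : ℂ :=
  ∑ j ∈ c.support, (c j : ℂ) * q ^ j

/-- The ℓ¹-norm of an integer Laurent polynomial: `∑_j |a_j|`. -/
noncomputable def laurentL1 (c : ℤ →₀ ℤ) : ℝ :=
  ∑ j ∈ c.support, |(c j : ℝ)|

/-- `g_k(α, ε) = (∏_{j=1}^{k} ((e^{α/2} − e^{−α/2})² − (e^{jε/2} − e^{−jε/2})²)) · C_k(e^ε)`. -/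
noncomputable def gAux (C : ℕ → (ℤ →₀ ℤ)) (k : ℕ) (α ε : ℂ) : ℂ :=
  (∏ j ∈ Finset.Icc 1 k,
    ((Complex.exp (α / 2) - Complex.exp (-α / 2)) ^ 2
      - (Complex.exp ((j : ℂ) * ε / 2) - Complex.exp (-((j : ℂ) * ε / 2))) ^ 2)) *
    laurentEval (C k) (Complex.exp ε)

open Complex


-- Cauchy estimate for iterated derivatives
lemma cauchy_iteratedDeriv_bound {f : ℂ → ℂ} (hf : Differentiable ℂ f) {r M : ℝ} (hr : 0 < r)
    (hM : ∀ w : ℂ, ‖w‖ ≤ r → ‖f w‖ ≤ M) (n : ℕ) :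
    ‖iteratedDeriv n f 0‖ ≤ n.factorial * (M / r ^ n) := by
  obtain ⟨R, hR⟩ : ∃ R : NNReal, (R : ℝ) = r := ⟨⟨r, hr.le⟩, rfl⟩
  subst hR
  have hR0 : 0 < R := by exact_mod_cast hr
  have hball : HasFPowerSeriesOnBall f (cauchyPowerSeries f 0 R) 0 R :=
    (hf.differentiableOn).hasFPowerSeriesOnBall hR0
  have h1 := hball.factorial_smul (1 : ℂ) n
  have h2 := norm_cauchyPowerSeries_le f 0 R n
  have hM0 : 0 ≤ M := le_trans (norm_nonneg _) (hM 0 (by simp [hr.le]))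
  have hint : (2 * Real.pi)⁻¹ * ∫ θ : ℝ in (0)..2 * Real.pi, ‖f (circleMap 0 R θ)‖ ≤ M := by
    have : ∫ θ : ℝ in (0)..2 * Real.pi, ‖f (circleMap 0 R θ)‖ ≤
        ∫ _ : ℝ in (0)..2 * Real.pi, M := by
      apply intervalIntegral.integral_mono_on Real.two_pi_pos.le
      · exact ((hf.continuous.comp (continuous_circleMap 0 R)).norm).intervalIntegrable _ _
      · exact intervalIntegrable_const
      · intro θ _
        exact hM _ (by simp [Real.norm_eq_abs, norm_circleMap_zero])
    calc (2 * Real.pi)⁻¹ * ∫ θ : ℝ in (0)..2 * Real.pi, ‖f (circleMap 0 R θ)‖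
        ≤ (2 * Real.pi)⁻¹ * ((2 * Real.pi) * M) := by
          apply mul_le_mul_of_nonneg_left _ (by positivity)
          simpa using this
      _ = M := by field_simp
  have h3 : ‖(cauchyPowerSeries f 0 R n) (fun _ => (1 : ℂ))‖ ≤ M / (R:ℝ) ^ n := by
    calc ‖(cauchyPowerSeries f 0 R n) (fun _ => (1 : ℂ))‖
        ≤ ‖cauchyPowerSeries f 0 R n‖ * ∏ _i : Fin n, ‖(1 : ℂ)‖ :=
          (cauchyPowerSeries f 0 R n).le_opNorm _
      _ ≤ (M * |(R : ℝ)|⁻¹ ^ n) * 1 := by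
          apply mul_le_mul _ (by simp) (by positivity) (by positivity)
          exact h2.trans (by
            apply mul_le_mul_of_nonneg_right hint
            positivity)
      _ = M / (R:ℝ) ^ n := by
          rw [_root_.abs_of_nonneg R.coe_nonneg]
          field_simp
          rw [one_div, inv_pow, inv_mul_cancel_right₀ (pow_ne_zero _ hr.ne')]
  rw [iteratedDeriv_eq_iteratedFDeriv]
  have heq : iteratedFDeriv ℂ n f 0 (fun _ => (1:ℂ)) =
      n.factorial • (cauchyPowerSeries f 0 R n) (fun _ => (1:ℂ)) := h1.symm
  rw [heq, nsmul_eq_mul, norm_mul]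
  simp only [Complex.norm_natCast]
  exact mul_le_mul_of_nonneg_left h3 (by positivity)

lemma taylor_tail_bound {f : ℂ → ℂ} (hf : Differentiable ℂ f) {r M : ℝ} (hr : 0 < r)
    (hM : ∀ w : ℂ, ‖w‖ ≤ r → ‖f w‖ ≤ M) {z : ℂ} (hz : ‖z‖ ≤ r / 2) (N : ℕ) :
    ‖f z - ∑ j ∈ Finset.range N, (1 / (j.factorial : ℂ)) * iteratedDeriv j f 0 * z ^ j‖
      ≤ 2 * M * (‖z‖ / r) ^ N := by
  have hM0 : 0 ≤ M := le_trans (norm_nonneg _) (hM 0 (by simp [hr.le]))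
  set a : ℕ → ℂ := fun j => (1 / (j.factorial : ℂ)) * iteratedDeriv j f 0 * z ^ j with ha
  have hsum : HasSum a (f z) := by
    have := Complex.hasSum_taylorSeries_of_entire hf 0 z
    simp only [sub_zero] at this
    convert this using 2 with j
    · rfl
    simp only [ha, smul_eq_mul]
    ring
  set q : ℝ := ‖z‖ / r with hqdef
  have habd : ∀ j : ℕ, ‖a j‖ ≤ M * q ^ j := by
    intro j
    have h1 := cauchy_iteratedDeriv_bound hf hr hM j
    have h2 : ‖a j‖ = (j.factorial : ℝ)⁻¹ * ‖iteratedDeriv j f 0‖ * ‖z‖ ^ j := by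
      simp [ha, norm_mul, norm_pow]
    rw [h2]
    have hfac : (0:ℝ) < j.factorial := by exact_mod_cast j.factorial_pos
    calc (j.factorial : ℝ)⁻¹ * ‖iteratedDeriv j f 0‖ * ‖z‖ ^ j
        ≤ (j.factorial : ℝ)⁻¹ * (j.factorial * (M / r ^ j)) * ‖z‖ ^ j := by gcongr
      _ = M * q ^ j := by
          rw [hqdef, div_pow]
          field_simp
  have hq : q ≤ 1 / 2 := by
    rw [hqdef, div_le_div_iff₀ (by positivity) (by norm_num)]
    linarith
  have hq0 : 0 ≤ q := by positivity
  have hq1 : q < 1 := lt_of_le_of_lt hq (by norm_num)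
  have hsumm : Summable a := hsum.summable
  have key : f z - ∑ j ∈ Finset.range N, a j = ∑' i : ℕ, a (i + N) := by
    have h := Summable.sum_add_tsum_nat_add (f := a) N hsumm
    rw [hsum.tsum_eq] at h
    rw [← h]; ring
  rw [key]
  have hgs : Summable (fun i : ℕ => M * q ^ N * q ^ i) :=
    (summable_geometric_of_lt_one hq0 hq1).mul_left _
  have hbdd : ∀ i : ℕ, ‖a (i + N)‖ ≤ M * q ^ N * q ^ i := by
    intro i
    calc ‖a (i + N)‖ ≤ M * q ^ (i + N) := habd _
      _ = M * q ^ N * q ^ i := by ring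
  have hnsumm : Summable (fun i : ℕ => ‖a (i + N)‖) :=
    Summable.of_nonneg_of_le (fun i => norm_nonneg _) hbdd hgs
  calc ‖∑' i : ℕ, a (i + N)‖ ≤ ∑' i : ℕ, ‖a (i + N)‖ := norm_tsum_le_tsum_norm hnsumm
    _ ≤ ∑' i : ℕ, M * q ^ N * q ^ i := Summable.tsum_le_tsum hbdd hnsumm hgs
    _ = M * q ^ N * (1 - q)⁻¹ := by
        rw [tsum_mul_left, tsum_geometric_of_lt_one hq0 hq1]
    _ ≤ 2 * M * q ^ N := by
        have h2 : (1 - q)⁻¹ ≤ 2 := by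
          rw [inv_le_comm₀ (by linarith) (by norm_num)]
          linarith
        calc M * q ^ N * (1 - q)⁻¹ ≤ M * q ^ N * 2 := by
              apply mul_le_mul_of_nonneg_left h2 (by positivity)
          _ = 2 * M * q ^ N := by ring

lemma norm_exp_le_exp_norm' (z : ℂ) : ‖Complex.exp z‖ ≤ Real.exp ‖z‖ := by
  rw [Complex.norm_exp]
  exact Real.exp_le_exp.mpr (Complex.re_le_norm z)

lemma sinh_term_bound {x : ℂ} (hx : ‖x‖ ≤ 1) :
    ‖Complex.exp (x / 2) - Complex.exp (-(x / 2))‖ ≤ 4 * ‖x‖ := by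
  have hfact : Complex.exp (x / 2) - Complex.exp (-(x / 2)) =
      Complex.exp (-(x / 2)) * (Complex.exp x - 1) := by
    rw [mul_sub, ← Complex.exp_add, mul_one]
    ring_nf
  rw [hfact, norm_mul]
  have h1 : ‖Complex.exp (-(x / 2))‖ ≤ 2 := by
    refine (norm_exp_le_exp_norm' _).trans ?_
    have h2 : ‖-(x / 2)‖ ≤ 1 / 2 := by
      rw [norm_neg, norm_div]
      simp only [Complex.norm_ofNat]
      nlinarith [norm_nonneg x]
    refine (Real.exp_le_exp.mpr h2).trans ?_
    have := Real.exp_one_lt_d9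
    have hp := Real.exp_pos (1/2 : ℝ)
    have hsq : Real.exp (1/2 : ℝ) * Real.exp (1/2 : ℝ) = Real.exp 1 := by
      rw [← Real.exp_add]; norm_num
    nlinarith
  have h2 : ‖Complex.exp x - 1‖ ≤ 2 * ‖x‖ := by
    have := Complex.norm_exp_sub_one_le (x := x) hx
    exact this
  calc ‖Complex.exp (-(x / 2))‖ * ‖Complex.exp x - 1‖ ≤ 2 * (2 * ‖x‖) := by
        apply mul_le_mul h1 h2 (norm_nonneg _) (by norm_num)
    _ = 4 * ‖x‖ := by ring

lemma gAux_norm_le (C : ℕ → (ℤ →₀ ℤ)) (k : ℕ) (α ε : ℂ) {c : ℝ} (hc0 : 0 < c) (hc1 : c ≤ 1)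
    (hα : ‖α‖ ≤ c / 2) (hε : (k : ℝ) * ‖ε‖ ≤ c) {T : ℝ}
    (hle : ‖laurentEval (C k) (Complex.exp ε)‖ ≤ T) :
    ‖gAux C k α ε‖ ≤ (20 * c ^ 2) ^ k * T := by
  unfold gAux
  rw [norm_mul]
  have hT0 : 0 ≤ T := le_trans (norm_nonneg _) hle
  apply mul_le_mul _ hle (norm_nonneg _) (by positivity)
  rw [norm_prod]
  calc ∏ j ∈ Finset.Icc 1 k, ‖(Complex.exp (α / 2) - Complex.exp (-α / 2)) ^ 2
      - (Complex.exp ((j : ℂ) * ε / 2) - Complex.exp (-((j : ℂ) * ε / 2))) ^ 2‖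
      ≤ ∏ _j ∈ Finset.Icc 1 k, (20 * c ^ 2) := by
        apply Finset.prod_le_prod (fun _ _ => norm_nonneg _)
        intro j hj
        obtain ⟨hj1, hjk⟩ := Finset.mem_Icc.mp hj
        have hα1 : ‖α‖ ≤ 1 := hα.trans (by linarith)
        have hjε : ‖(j : ℂ) * ε‖ ≤ c := by
          rw [norm_mul, Complex.norm_natCast]
          calc (j : ℝ) * ‖ε‖ ≤ (k : ℝ) * ‖ε‖ := by
                apply mul_le_mul_of_nonneg_right _ (norm_nonneg _)
                exact_mod_cast hjk
            _ ≤ c := hε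
        have hjε1 : ‖(j : ℂ) * ε‖ ≤ 1 := hjε.trans hc1
        have b1 : ‖Complex.exp (α / 2) - Complex.exp (-α / 2)‖ ≤ 4 * ‖α‖ := by
          rw [neg_div]
          exact sinh_term_bound hα1
        have b2 : ‖Complex.exp ((j : ℂ) * ε / 2) - Complex.exp (-((j : ℂ) * ε / 2))‖
            ≤ 4 * ‖(j : ℂ) * ε‖ := sinh_term_bound hjε1
        calc ‖(Complex.exp (α / 2) - Complex.exp (-α / 2)) ^ 2
            - (Complex.exp ((j : ℂ) * ε / 2) - Complex.exp (-((j : ℂ) * ε / 2))) ^ 2‖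
            ≤ ‖(Complex.exp (α / 2) - Complex.exp (-α / 2)) ^ 2‖
              + ‖(Complex.exp ((j : ℂ) * ε / 2) - Complex.exp (-((j : ℂ) * ε / 2))) ^ 2‖ :=
              norm_sub_le _ _
          _ ≤ (4 * ‖α‖) ^ 2 + (4 * ‖(j : ℂ) * ε‖) ^ 2 := by
              rw [norm_pow, norm_pow]
              gcongr <;> positivity
          _ ≤ (4 * (c / 2)) ^ 2 + (4 * c) ^ 2 := by gcongr <;> positivity
          _ = 20 * c ^ 2 := by ring
    _ = (20 * c ^ 2) ^ k := by
        rw [Finset.prod_const, Nat.card_Icc]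
        norm_num

lemma laurentEval_exp (c : ℤ →₀ ℤ) (ε : ℂ) :
    laurentEval c (Complex.exp ε) = ∑ j ∈ c.support, (c j : ℂ) * Complex.exp (j * ε) := by
  unfold laurentEval
  refine Finset.sum_congr rfl fun j _ => ?_
  rw [Complex.exp_int_mul]

lemma gAux_differentiable (C : ℕ → (ℤ →₀ ℤ)) (k : ℕ) (α : ℂ) :
    Differentiable ℂ (gAux C k α) := by
  apply Differentiable.mul
  · apply Differentiable.fun_finset_prod
    intro j _
    apply Differentiable.sub (differentiable_const _)
    apply Differentiable.pow
    apply Differentiable.sub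
    · exact Complex.differentiable_exp.comp ((differentiable_id.const_mul _).div_const _)
    · exact Complex.differentiable_exp.comp
        (((differentiable_id.const_mul _).div_const _).neg)
  · have : (fun ε => laurentEval (C k) (Complex.exp ε)) =
        fun ε => ∑ j ∈ (C k).support, ((C k) j : ℂ) * Complex.exp (j * ε) := by
      funext ε; exact laurentEval_exp _ _
    rw [this]
    apply Differentiable.fun_sum
    intro j _
    exact (Complex.differentiable_exp.comp (differentiable_id.const_mul _)).const_mul _


lemma laurentEval_exp_norm_le (c : ℤ →₀ ℤ) (ε : ℂ) {T : ℝ}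
    (hT : ∀ j ∈ c.support, |(j : ℝ)| * ‖ε‖ ≤ T) :
    ‖laurentEval c (Complex.exp ε)‖ ≤ laurentL1 c * Real.exp T := by
  rw [laurentEval_exp, laurentL1, Finset.sum_mul]
  refine (norm_sum_le _ _).trans (Finset.sum_le_sum fun j hj => ?_)
  rw [norm_mul]
  have h1 : ‖((c j : ℂ))‖ = |(c j : ℝ)| := by
    rw [Complex.norm_intCast]
  rw [h1]
  apply mul_le_mul_of_nonneg_left _ (abs_nonneg _)
  calc ‖Complex.exp (j * ε)‖ ≤ Real.exp ‖(j : ℂ) * ε‖ := norm_exp_le_exp_norm' _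
    _ ≤ Real.exp T := by
        apply Real.exp_le_exp.mpr
        calc ‖(j : ℂ) * ε‖ = |(j : ℝ)| * ‖ε‖ := by
              rw [norm_mul, Complex.norm_intCast]
          _ ≤ T := hT j hj


/-- Under the growth hypotheses on `(C_k)`, there is an open neighborhood `U`
of `0` such that for every `N ≥ 1` there is `M_N > 0` with: for all `n ≥ 1` and `α ∈ U`,
`α ≠ 0`,
`|n/α|^N · |∑_{k=0}^{n} (g_k(α, α/n) − ∑_{j=0}^{N−1} (1/j!) ∂^j_ε g_k(α,0) (α/n)^j)| ≤ M_N`. -/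
theorem taylor_remainder_uniform_bound (C : ℕ → (ℤ →₀ ℤ)) (A B D : ℝ)
    (hA : 0 < A) (hB : 0 < B) (hD : 0 < D)
    (hnorm : ∀ k : ℕ, 1 ≤ k → laurentL1 (C k) ≤ Real.exp (A * k + B * Real.log k))
    (hsupp : ∀ k : ℕ, 1 ≤ k → ∀ j ∈ (C k).support, |(j : ℝ)| ≤ D * (k : ℝ) ^ 2) :
    ∃ U : Set ℂ, IsOpen U ∧ 0 ∈ U ∧
      ∀ N : ℕ, 1 ≤ N → ∃ M : ℝ, 0 < M ∧
        ∀ n : ℕ, 1 ≤ n → ∀ α ∈ U, α ≠ 0 →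
          ‖(n : ℂ) / α‖ ^ N *
            ‖∑ k ∈ Finset.range (n + 1),
              (gAux C k α (α / n) -
                ∑ j ∈ Finset.range N,
                  (1 / (j.factorial : ℂ)) * iteratedDeriv j (gAux C k α) 0 * (α / n) ^ j)‖ ≤
            M := by
  set c : ℝ := min 1 (Real.exp (-(A + B + D)) / 40) with hc
  have hc0 : 0 < c := lt_min one_pos (by positivity)
  have hc1 : c ≤ 1 := min_le_left _ _
  have hc40 : c ≤ Real.exp (-(A + B + D)) / 40 := min_le_right _ _
  have hrho : 20 * c ^ 2 * Real.exp (A + B + D * c) ≤ 1 / 2 := by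
    have h1 : Real.exp (A + B + D * c) ≤ Real.exp (A + B + D) := by
      apply Real.exp_le_exp.mpr
      nlinarith
    have h2 : Real.exp (-(A + B + D)) * Real.exp (A + B + D) = 1 := by
      rw [← Real.exp_add, neg_add_cancel, Real.exp_zero]
    have h3 : (0:ℝ) < Real.exp (A + B + D) := Real.exp_pos _
    have hcc : c ^ 2 ≤ c * (Real.exp (-(A + B + D)) / 40) := by nlinarith
    have h4 : 20 * c ^ 2 * Real.exp (A + B + D * c) ≤
        20 * (c * (Real.exp (-(A + B + D)) / 40)) * Real.exp (A + B + D) := by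
      apply mul_le_mul _ h1 (Real.exp_pos _).le (by positivity)
      nlinarith
    have h5 : c * (Real.exp (-(A + B + D)) * Real.exp (A + B + D)) = c := by
      rw [h2, mul_one]
    nlinarith [h4, h5, hc1]
  set S₀ : ℝ := ∑ j ∈ (C 0).support, |(j : ℝ)| with hS₀
  have hS₀0 : 0 ≤ S₀ := Finset.sum_nonneg fun _ _ => abs_nonneg _
  set E₀ : ℝ := laurentL1 (C 0) * Real.exp (S₀ * c) with hE₀
  have hE₀0 : 0 ≤ E₀ := by
    apply mul_nonneg _ (Real.exp_pos _).le
    exact Finset.sum_nonneg fun _ _ => abs_nonneg _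
  refine ⟨Metric.ball 0 (c / 2), Metric.isOpen_ball, by simp [hc0], ?_⟩
  intro N hN
  have hhalf : ‖(1/2 : ℝ)‖ < 1 := by
    rw [Real.norm_eq_abs, _root_.abs_of_nonneg (by norm_num : (0:ℝ) ≤ 1/2)]; norm_num
  have hu_summ : Summable (fun k : ℕ => (E₀ + (k : ℝ) ^ N) * (1 / 2 : ℝ) ^ k) := by
    have h1 : Summable (fun k : ℕ => E₀ * (1 / 2 : ℝ) ^ k) :=
      (summable_geometric_of_lt_one (by norm_num) (by norm_num)).mul_left _
    have h2 : Summable (fun k : ℕ => (k : ℝ) ^ N * (1 / 2 : ℝ) ^ k) :=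
      summable_pow_mul_geometric_of_norm_lt_one N hhalf
    simpa [add_mul] using h1.add h2
  set S : ℝ := ∑' k : ℕ, (E₀ + (k : ℝ) ^ N) * (1 / 2 : ℝ) ^ k with hS
  have hu_nonneg : ∀ k : ℕ, 0 ≤ (E₀ + (k : ℝ) ^ N) * (1 / 2 : ℝ) ^ k := by
    intro k; positivity
  have hS0 : 0 ≤ S := tsum_nonneg hu_nonneg
  refine ⟨2 * (1 / c) ^ N * S + 1, by positivity, ?_⟩
  intro n hn α hαU hα0
  rw [Metric.mem_ball, dist_zero_right] at hαU
  have hn0 : (0:ℝ) < n := by exact_mod_cast hn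
  have hα : 0 < ‖α‖ := norm_pos_iff.mpr hα0
  set z : ℂ := α / (n : ℂ) with hz
  have hzn : ‖z‖ = ‖α‖ / n := by
    rw [hz, norm_div, Complex.norm_natCast]
  have hz0 : 0 < ‖z‖ := by rw [hzn]; positivity
  have habs : ‖(n : ℂ) / α‖ = ‖z‖⁻¹ := by
    rw [hzn]
    rw [norm_div, Complex.norm_natCast]
    rw [inv_div]
  -- per-k bound
  have hkey : ∀ k ∈ Finset.range (n + 1),
      ‖(n : ℂ) / α‖ ^ N *
        ‖gAux C k α z - ∑ j ∈ Finset.range N,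
          (1 / (j.factorial : ℂ)) * iteratedDeriv j (gAux C k α) 0 * z ^ j‖ ≤
      2 * (1 / c) ^ N * ((E₀ + (k : ℝ) ^ N) * (1 / 2 : ℝ) ^ k) := by
    intro k hk
    have hkn : k ≤ n := Nat.lt_succ_iff.mp (Finset.mem_range.mp hk)
    set m : ℝ := max (k : ℝ) 1 with hm
    have hm1 : 1 ≤ m := le_max_right _ _
    have hm0 : 0 < m := lt_of_lt_of_le one_pos hm1
    have hmn : m ≤ n := by
      rw [hm]
      apply max_le _ (by exact_mod_cast hn)
      exact_mod_cast hkn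
    have hkm : (k : ℝ) ≤ m := le_max_left _ _
    set r : ℝ := c / m with hr
    have hr0 : 0 < r := by positivity
    -- bound on closed ball of radius r
    obtain ⟨Bk, hBk0, hBkbound, hBkfinal⟩ :
        ∃ Bk : ℝ, 0 ≤ Bk ∧ (∀ w : ℂ, ‖w‖ ≤ r → ‖gAux C k α w‖ ≤ Bk) ∧
          Bk * m ^ N ≤ (E₀ + (k : ℝ) ^ N) * (1 / 2 : ℝ) ^ k := by
      rcases Nat.eq_zero_or_pos k with hk0 | hk1
      · subst hk0
        have hmeq : m = 1 := by rw [hm]; simp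
        refine ⟨E₀, hE₀0, ?_, ?_⟩
        · intro w hw
          have hwc : ‖w‖ ≤ c := by
            rw [hr, hmeq, div_one] at hw
            exact hw
          have hle : ‖laurentEval (C 0) (Complex.exp w)‖ ≤ E₀ := by
            rw [hE₀]
            apply laurentEval_exp_norm_le
            intro j hj
            have h1 : |(j:ℝ)| ≤ S₀ := by
              rw [hS₀]
              exact Finset.single_le_sum (f := fun i : ℤ => |(i:ℝ)|)
                (fun i _ => abs_nonneg _) hj
            exact mul_le_mul h1 hwc (norm_nonneg _) hS₀0
          have hg := gAux_norm_le C 0 α w hc0 hc1 hαU.le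
            (by simpa using hc0.le) hle
          simpa using hg
        · have h0 : ((0:ℕ):ℝ) ^ N = 0 := by
            rw [Nat.cast_zero]
            exact zero_pow (by omega)
          rw [hmeq, one_pow, mul_one, h0, add_zero, pow_zero, mul_one]
      · have hk1' : (1:ℝ) ≤ (k:ℝ) := by exact_mod_cast hk1
        have hmeq : m = (k:ℝ) := by rw [hm]; exact max_eq_left hk1'
        have hkpos : (0:ℝ) < k := by linarith
        refine ⟨(20 * c ^ 2) ^ k * Real.exp ((A + B + D * c) * k), by positivity, ?_, ?_⟩
        · intro w hw
          rw [hr, hmeq] at hw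
          have hε : (k:ℝ) * ‖w‖ ≤ c := (le_div_iff₀' hkpos).mp hw
          apply gAux_norm_le C k α w hc0 hc1 hαU.le hε
          have hle1 : ‖laurentEval (C k) (Complex.exp w)‖ ≤
              laurentL1 (C k) * Real.exp (D * c * k) := by
            apply laurentEval_exp_norm_le
            intro j hj
            calc |(j:ℝ)| * ‖w‖ ≤ (D * (k:ℝ)^2) * (c / k) := by
                  apply mul_le_mul (hsupp k hk1 j hj) hw (norm_nonneg _) (by positivity)
              _ = D * c * k := by field_simp
          refine hle1.trans ?_
          calc laurentL1 (C k) * Real.exp (D * c * k)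
              ≤ Real.exp (A * k + B * Real.log k) * Real.exp (D * c * k) := by
                apply mul_le_mul_of_nonneg_right (hnorm k hk1) (Real.exp_pos _).le
            _ = Real.exp (A * k + B * Real.log k + D * c * k) := by rw [← Real.exp_add]
            _ ≤ Real.exp ((A + B + D * c) * k) := by
                apply Real.exp_le_exp.mpr
                have hlog : Real.log k ≤ (k:ℝ) :=
                  (Real.log_le_sub_one_of_pos hkpos).trans (by linarith)
                nlinarith
        · have hfac : (20 * c ^ 2) ^ k * Real.exp ((A + B + D * c) * k)
              = (20 * c ^ 2 * Real.exp (A + B + D * c)) ^ k := by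
            rw [mul_comm (A + B + D * c) ((k:ℝ)), Real.exp_nat_mul]
            ring
          rw [hfac, hmeq]
          have hstep : (20 * c ^ 2 * Real.exp (A + B + D * c)) ^ k ≤ (1 / 2 : ℝ) ^ k :=
            pow_le_pow_left₀ (by positivity) hrho k
          calc (20 * c ^ 2 * Real.exp (A + B + D * c)) ^ k * (k:ℝ) ^ N
              ≤ (1 / 2 : ℝ) ^ k * (k:ℝ) ^ N := by
                apply mul_le_mul_of_nonneg_right hstep (by positivity)
            _ ≤ (E₀ + (k:ℝ) ^ N) * (1 / 2 : ℝ) ^ k := by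
                have h1 : (k:ℝ) ^ N ≤ E₀ + (k:ℝ) ^ N := by linarith
                have h2 := mul_le_mul_of_nonneg_right h1
                  (pow_nonneg (by norm_num : (0:ℝ) ≤ 1/2) k)
                linarith [h2]
    have hzr : ‖z‖ ≤ r / 2 := by
      rw [hzn, hr]
      rw [div_le_div_iff₀ hn0 (by norm_num)]
      calc ‖α‖ * 2 ≤ c := by linarith
        _ = (c / m) * m := by field_simp
        _ ≤ (c / m) * n := by
            apply mul_le_mul_of_nonneg_left hmn (by positivity)
    have htaylor := taylor_tail_bound (gAux_differentiable C k α) hr0 hBkbound hzr N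
    calc ‖(n : ℂ) / α‖ ^ N *
          ‖gAux C k α z - ∑ j ∈ Finset.range N,
            (1 / (j.factorial : ℂ)) * iteratedDeriv j (gAux C k α) 0 * z ^ j‖
        ≤ ‖(n : ℂ) / α‖ ^ N * (2 * Bk * (‖z‖ / r) ^ N) := by
          apply mul_le_mul_of_nonneg_left htaylor (by positivity)
      _ = 2 * Bk * (‖z‖⁻¹ * (‖z‖ / r)) ^ N := by
          rw [habs, mul_pow]; ring
      _ = 2 * Bk * (1 / r) ^ N := by
          congr 2
          rw [div_eq_mul_inv, ← mul_assoc, inv_mul_cancel₀ (ne_of_gt hz0), one_mul, one_div]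
      _ = 2 * (1 / c) ^ N * (Bk * m ^ N) := by
          rw [hr, one_div_div, div_pow, div_pow, one_pow]
          field_simp
      _ ≤ 2 * (1 / c) ^ N * ((E₀ + (k : ℝ) ^ N) * (1 / 2 : ℝ) ^ k) := by
          apply mul_le_mul_of_nonneg_left hBkfinal (by positivity)
  -- assemble
  calc ‖(n : ℂ) / α‖ ^ N * ‖∑ k ∈ Finset.range (n + 1),
        (gAux C k α z - ∑ j ∈ Finset.range N,
          (1 / (j.factorial : ℂ)) * iteratedDeriv j (gAux C k α) 0 * z ^ j)‖
      ≤ ‖(n : ℂ) / α‖ ^ N * ∑ k ∈ Finset.range (n + 1),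
        ‖gAux C k α z - ∑ j ∈ Finset.range N,
          (1 / (j.factorial : ℂ)) * iteratedDeriv j (gAux C k α) 0 * z ^ j‖ := by
        apply mul_le_mul_of_nonneg_left (norm_sum_le _ _) (by positivity)
    _ = ∑ k ∈ Finset.range (n + 1), ‖(n : ℂ) / α‖ ^ N *
        ‖gAux C k α z - ∑ j ∈ Finset.range N,
          (1 / (j.factorial : ℂ)) * iteratedDeriv j (gAux C k α) 0 * z ^ j‖ := by
        rw [Finset.mul_sum]
    _ ≤ ∑ k ∈ Finset.range (n + 1),
        2 * (1 / c) ^ N * ((E₀ + (k : ℝ) ^ N) * (1 / 2 : ℝ) ^ k) :=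
        Finset.sum_le_sum hkey
    _ = 2 * (1 / c) ^ N * ∑ k ∈ Finset.range (n + 1),
        ((E₀ + (k : ℝ) ^ N) * (1 / 2 : ℝ) ^ k) := by rw [← Finset.mul_sum]
    _ ≤ 2 * (1 / c) ^ N * S := by
        apply mul_le_mul_of_nonneg_left _ (by positivity)
        exact Summable.sum_le_tsum _ (fun k _ => hu_nonneg k) hu_summ
    _ ≤ 2 * (1 / c) ^ N * S + 1 := by linarith
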